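/- Let C be a monoidal category, c an object of C, and let Δ : c ⟶ c ⊗ c and ε : c ⟶ 𝟙 be morphisms such that the composite c ⟶Δ c ⊗ c ⟶(ε ⊗ ε) 𝟙 ⊗ 𝟙 ≅ 𝟙 equals ε. Define r := Δ ≫ (ε ▷ c) ≫ λ_c and s := Δ ≫ (c ◁ ε) ≫ ρ_c (both morphisms c ⟶ c), and assume that r and s are isomorphisms. Then the morphism Δ' := Δ ≫ (s⁻¹ ⊗ r⁻¹) together with ε satisfies both counit identities: Δ' ≫ (ε ▷ c) ≫ λ_c = 𝟙_c and Δ' ≫ (c ◁ ε) ≫ ρ_c = 𝟙_c. -/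

import Mathlib

open CategoryTheory MonoidalCategory

/-- Repairing a failed counit: if `Δ : c ⟶ c ⊗ c`, `ε : c ⟶ 𝟙` satisfy
`(ε ⊗ₘ ε) ∘ Δ = ε` (via the unitor `𝟙 ⊗ 𝟙 ≅ 𝟙`) and the morphisms
`r = Δ ≫ (ε ▷ c) ≫ λ_c` and `s = Δ ≫ (c ◁ ε) ≫ ρ_c` are isomorphisms, then
`Δ' = Δ ≫ (s⁻¹ ⊗ r⁻¹)` together with `ε` satisfies both counit identities. -/
theorem repaired_counit {C : Type*} [Category C] [MonoidalCategory C] (c : C)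
    (Δ : c ⟶ c ⊗ c) (ε : c ⟶ 𝟙_ C)
    (hεε : Δ ≫ (ε ⊗ₘ ε) ≫ (λ_ (𝟙_ C)).hom = ε)
    (r s : c ⟶ c)
    (hr : r = Δ ≫ (ε ▷ c) ≫ (λ_ c).hom)
    (hs : s = Δ ≫ (c ◁ ε) ≫ (ρ_ c).hom)
    [IsIso r] [IsIso s] :
    (Δ ≫ (inv s ⊗ₘ inv r)) ≫ (ε ▷ c) ≫ (λ_ c).hom = 𝟙 c ∧
      (Δ ≫ (inv s ⊗ₘ inv r)) ≫ (c ◁ ε) ≫ (ρ_ c).hom = 𝟙 c := by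
  have hsε : s ≫ ε = ε := by
    have : Δ ≫ (c ◁ ε) ≫ (ρ_ c).hom ≫ ε = Δ ≫ (ε ⊗ₘ ε) ≫ (λ_ (𝟙_ C)).hom := by
      simp only [tensorHom_def', Category.assoc, unitors_equal,
        MonoidalCategory.rightUnitor_naturality]
    rw [hs, Category.assoc, Category.assoc, this, hεε]
  have hrε : r ≫ ε = ε := by
    have : Δ ≫ (ε ▷ c) ≫ (λ_ c).hom ≫ ε = Δ ≫ (ε ⊗ₘ ε) ≫ (λ_ (𝟙_ C)).hom := by
      simp only [MonoidalCategory.tensorHom_def, Category.assoc,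
        MonoidalCategory.leftUnitor_naturality]
    rw [hr, Category.assoc, Category.assoc, this, hεε]
  have hsε' : inv s ≫ ε = ε := by rw [IsIso.inv_comp_eq, hsε]
  have hrε' : inv r ≫ ε = ε := by rw [IsIso.inv_comp_eq, hrε]
  constructor
  · have : (Δ ≫ (inv s ⊗ₘ inv r)) ≫ (ε ▷ c) ≫ (λ_ c).hom
        = (Δ ≫ (ε ▷ c) ≫ (λ_ c).hom) ≫ inv r := by
      simp only [MonoidalCategory.tensorHom_def, Category.assoc, whisker_exchange_assoc,
        MonoidalCategory.leftUnitor_naturality, ← comp_whiskerRight_assoc, hsε']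
    rw [this, ← hr, IsIso.hom_inv_id]
  · have : (Δ ≫ (inv s ⊗ₘ inv r)) ≫ (c ◁ ε) ≫ (ρ_ c).hom
        = (Δ ≫ (c ◁ ε) ≫ (ρ_ c).hom) ≫ inv s := by
      simp only [tensorHom_def', Category.assoc, ← whisker_exchange_assoc,
        MonoidalCategory.rightUnitor_naturality, ← MonoidalCategory.whiskerLeft_comp_assoc, hrε']
    rw [this, ← hs, IsIso.hom_inv_id]
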